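/- arXiv:1501.00857 — 2 statements merged into one kernel-verified Lean document; each statement's English description precedes it below -/
import Mathlib

section
/- Let d and N be positive natural numbers, x : Fin N → ℝ^d a family of data points, S a finite subset of Fin N, and T ⊆ S with T nonempty and |T| < |S|. Define the empirical mean over a finite nonempty index set A as μ(A) = (1/|A|) ∑_{i∈A} x_i and the empirical covariance matrix as Σ(A) = (1/|A|) ∑_{i∈A} (x_i − μ(A))(x_i − μ(A))ᵀ, a d×d real matrix formed from outer products. Then Σ(S \ T) = (|S|/(|S|−|T|))·Σ(S) − (|T|/(|S|−|T|))·Σ(T) − (|S|·|T|/(|S|−|T|)²)·(μ(S) − μ(T))(μ(S) − μ(T))ᵀ. -/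
open Matrix

/-- The empirical mean of the data points `x i`, `i ∈ A`: `μ(A) = (1/|A|) ∑_{i∈A} x_i`. -/
noncomputable def empMean {d N : ℕ} (x : Fin N → (Fin d → ℝ)) (A : Finset (Fin N)) :
    Fin d → ℝ :=
  (A.card : ℝ)⁻¹ • ∑ i ∈ A, x i

/-- The empirical covariance matrix of the data points `x i`, `i ∈ A`:
`Σ(A) = (1/|A|) ∑_{i∈A} (x_i − μ(A))(x_i − μ(A))ᵀ`, where `uvᵀ` is the outer product. -/
noncomputable def empCov {d N : ℕ} (x : Fin N → (Fin d → ℝ)) (A : Finset (Fin N)) :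
    Matrix (Fin d) (Fin d) ℝ :=
  (A.card : ℝ)⁻¹ • ∑ i ∈ A, vecMulVec (x i - empMean x A) (x i - empMean x A)

lemma cov_eq {d N : ℕ} (x : Fin N → (Fin d → ℝ)) (A : Finset (Fin N)) (hA : A.Nonempty) :
    empCov x A = (A.card : ℝ)⁻¹ • (∑ i ∈ A, vecMulVec (x i) (x i))
      - vecMulVec (empMean x A) (empMean x A) := by
  have ha : (A.card : ℝ) ≠ 0 := by exact_mod_cast hA.card_pos.ne'
  ext i j
  simp only [empCov, empMean, Matrix.sub_apply, Matrix.smul_apply, Finset.sum_apply,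
    Matrix.sum_apply, vecMulVec_apply, Pi.sub_apply, Pi.smul_apply, smul_eq_mul]
  simp only [sub_mul, mul_sub, Finset.sum_sub_distrib, ← Finset.sum_mul, ← Finset.mul_sum,
    Finset.sum_const, nsmul_eq_mul]
  field_simp
  ring

/-- Update rule for the empirical covariance matrix when a nonempty subset `T` of the
index set `S` is removed:
`Σ(S \ T) = (|S|/(|S|−|T|))·Σ(S) − (|T|/(|S|−|T|))·Σ(T)
           − (|S|·|T|/(|S|−|T|)²)·(μ(S) − μ(T))(μ(S) − μ(T))ᵀ`. -/
theorem empCov_update (d N : ℕ) (hd : 0 < d) (hN : 0 < N)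
    (x : Fin N → (Fin d → ℝ)) (S T : Finset (Fin N))
    (hTS : T ⊆ S) (hT : T.Nonempty) (hcard : T.card < S.card) :
    empCov x (S \ T) =
      ((S.card : ℝ) / ((S.card : ℝ) - (T.card : ℝ))) • empCov x S
      - ((T.card : ℝ) / ((S.card : ℝ) - (T.card : ℝ))) • empCov x T
      - (((S.card : ℝ) * (T.card : ℝ)) / ((S.card : ℝ) - (T.card : ℝ)) ^ 2) •
          vecMulVec (empMean x S - empMean x T) (empMean x S - empMean x T) := by
  have hS : S.Nonempty := Finset.card_pos.mp (hT.card_pos.trans hcard)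
  have hR : (S \ T).Nonempty := by
    rw [← Finset.card_pos, Finset.card_sdiff_of_subset hTS]
    omega
  have ha : (S.card : ℝ) ≠ 0 := by exact_mod_cast hS.card_pos.ne'
  have hb : (T.card : ℝ) ≠ 0 := by exact_mod_cast hT.card_pos.ne'
  have hc : (S.card : ℝ) - (T.card : ℝ) ≠ 0 := by
    have : (T.card : ℝ) < (S.card : ℝ) := by exact_mod_cast hcard
    linarith
  have hcardR : ((S \ T).card : ℝ) = (S.card : ℝ) - (T.card : ℝ) := by
    rw [Finset.card_sdiff_of_subset hTS]
    push_cast [Nat.cast_sub (Finset.card_le_card hTS)]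
    ring
  rw [cov_eq x _ hR, cov_eq x S hS, cov_eq x T hT]
  ext i j
  simp only [empMean, Matrix.sub_apply, Matrix.smul_apply, Finset.sum_apply, Matrix.sum_apply,
    vecMulVec_apply, Pi.sub_apply, Pi.smul_apply, smul_eq_mul, hcardR,
    Finset.sum_sdiff_eq_sub hTS]
  field_simp
  ring
end

section
/- Let d and N be positive natural numbers, x : Fin N → ℝ^d a family of data points, S a finite subset of Fin N with |S| ≥ 2, and a ∈ S. Define the empirical mean over a finite nonempty index set A as μ(A) = (1/|A|) ∑_{i∈A} x_i and the empirical covariance matrix as Σ(A) = (1/|A|) ∑_{i∈A} (x_i − μ(A))(x_i − μ(A))ᵀ. Then Σ(S \ {a}) = (|S|/(|S|−1))·Σ(S) − (|S|/(|S|−1)²)·(x_a − μ(S))(x_a − μ(S))ᵀ. -/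
open Matrix

/-- Auxiliary: expanding a sum of centered products. -/
lemma sum_centered_aux {N : ℕ} (A : Finset (Fin N)) (hc : (A.card : ℝ) ≠ 0)
    (f g : Fin N → ℝ) :
    ∑ k ∈ A, (f k - (A.card : ℝ)⁻¹ * ∑ l ∈ A, f l) * (g k - (A.card : ℝ)⁻¹ * ∑ l ∈ A, g l)
      = (∑ k ∈ A, f k * g k)
        - (A.card : ℝ)⁻¹ * (∑ k ∈ A, f k) * (∑ k ∈ A, g k) := by
  simp only [sub_mul, mul_sub, Finset.sum_sub_distrib, Finset.sum_const, nsmul_eq_mul,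
    ← Finset.sum_mul, ← Finset.mul_sum]
  field_simp
  ring

/-- Auxiliary: entrywise formula for the empirical covariance via second moments. -/
lemma empCov_entry_aux {d N : ℕ} (x : Fin N → (Fin d → ℝ)) (A : Finset (Fin N))
    (hc : (A.card : ℝ) ≠ 0) (i j : Fin d) :
    empCov x A i j
      = (A.card : ℝ)⁻¹ * (∑ k ∈ A, x k i * x k j)
        - ((A.card : ℝ)⁻¹ * ∑ k ∈ A, x k i) * ((A.card : ℝ)⁻¹ * ∑ k ∈ A, x k j) := by
  simp only [empCov, empMean, Matrix.smul_apply, Matrix.sum_apply, Finset.sum_apply,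
    vecMulVec_apply, Pi.sub_apply, Pi.smul_apply, smul_eq_mul]
  rw [sum_centered_aux A hc (fun k => x k i) (fun k => x k j)]
  field_simp

/-- Leave-one-out update rule for the empirical covariance matrix when a single element
`a` of the index set `S` is removed:
`Σ(S \ {a}) = (|S|/(|S|−1))·Σ(S) − (|S|/(|S|−1)²)·(x_a − μ(S))(x_a − μ(S))ᵀ`. -/
theorem empCov_update_loocv (d N : ℕ) (hd : 0 < d) (hN : 0 < N)
    (x : Fin N → (Fin d → ℝ)) (S : Finset (Fin N)) (a : Fin N)
    (ha : a ∈ S) (hcard : 2 ≤ S.card) :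
    empCov x (S \ {a}) =
      ((S.card : ℝ) / ((S.card : ℝ) - 1)) • empCov x S
      - ((S.card : ℝ) / ((S.card : ℝ) - 1) ^ 2) •
          vecMulVec (x a - empMean x S) (x a - empMean x S) := by
  have hsub : {a} ⊆ S := Finset.singleton_subset_iff.mpr ha
  have hcardT : (S \ {a}).card = S.card - 1 := by
    rw [Finset.card_sdiff_of_subset hsub, Finset.card_singleton]
  have h2 : (2 : ℝ) ≤ (S.card : ℝ) := by exact_mod_cast hcard
  have hn : (S.card : ℝ) ≠ 0 := by linarith
  have hn1 : (S.card : ℝ) - 1 ≠ 0 := by linarith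
  have hcastT : ((S \ {a}).card : ℝ) = (S.card : ℝ) - 1 := by
    rw [hcardT, Nat.cast_sub (by omega)]; simp
  have hcT : ((S \ {a}).card : ℝ) ≠ 0 := by rw [hcastT]; exact hn1
  have hsum : ∀ f : Fin N → ℝ, ∑ k ∈ S \ {a}, f k = (∑ k ∈ S, f k) - f a := by
    intro f
    rw [Finset.sum_sdiff_eq_sub hsub, Finset.sum_singleton]
  ext i j
  simp only [Matrix.sub_apply, Matrix.smul_apply, vecMulVec_apply, Pi.sub_apply,
    smul_eq_mul, empMean, Pi.smul_apply, Finset.sum_apply]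
  rw [empCov_entry_aux x (S \ {a}) hcT i j, empCov_entry_aux x S hn i j, hcastT,
    hsum (fun k => x k i * x k j), hsum (fun k => x k i), hsum (fun k => x k j)]
  field_simp
  ring
end
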